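/- Let ℐ be a finite collection of dyadic intervals of ℝ, (c_I)_{I∈ℐ} uniformly bounded complex numbers, (a_I) coefficient functionals, and Λ_ℐ(f,g) := Σ_{I∈ℐ} c_I a_I(f) a_I(g). Fix a dyadic interval I₀ and write ℐ(I₀) := {I ∈ ℐ : I ⊆ I₀}. Then for all 0 < p, q < ∞, |Λ_{ℐ(I₀)}(f,g)| ≤ C · (sup_{I'∈ℐ(I₀)} |I'|^{-1/p} ‖(Σ_{I⊆I', I∈ℐ(I₀)} |a_I(f)|² 1_I/|I|)^{1/2}‖_{L^{p,∞}}) · (sup_{I'∈ℐ(I₀)} |I'|^{-1/q} ‖(Σ_{I⊆I', I∈ℐ(I₀)} |a_I(g)|² 1_I/|I|)^{1/2}‖_{L^{q,∞}}) · |I₀|, with C depending only on p, q. -/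

import Mathlib

open MeasureTheory ENNReal
open scoped Classical

noncomputable section

/-- A dyadic interval `[m 2^k, (m+1) 2^k)` of `ℝ`. -/
structure DyadicI where
  k : ℤ
  m : ℤ
deriving DecidableEq

namespace DyadicI

/-- Left endpoint. -/
def a (I : DyadicI) : ℝ := (I.m : ℝ) * (2 : ℝ) ^ I.k

/-- The length of a dyadic interval. -/
def len (I : DyadicI) : ℝ := (2 : ℝ) ^ I.k

/-- The underlying set. -/
def set (I : DyadicI) : Set ℝ := Set.Ico I.a (I.a + I.len)

end DyadicI

/-- A collection `S` of dyadic intervals is `η`-sparse if one can choose pairwise disjoint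
measurable major subsets `E I ⊆ I` with `|E I| ≥ η |I|`. -/
def IsSparseD (η : ℝ) (S : Set DyadicI) : Prop :=
  ∃ E : DyadicI → Set ℝ,
    (∀ I ∈ S, MeasurableSet (E I)) ∧
    (∀ I ∈ S, E I ⊆ I.set) ∧
    S.PairwiseDisjoint E ∧
    ∀ I ∈ S, ENNReal.ofReal η * volume I.set ≤ volume (E I)

/-- The localization function `χ_I(x) = (1 + dist(x,I)/ℓ(I))⁻¹` of a dyadic interval. -/
def chiD (I : DyadicI) (x : ℝ) : ℝ := (1 + Metric.infDist x I.set / I.len)⁻¹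

/-- A family of coefficient functionals `a_I`, depending linearly on the function. -/
def IsLinearCoeff (a : DyadicI → (ℝ → ℝ) → ℂ) : Prop :=
  ∀ (I : DyadicI) (c : ℝ) (f g : ℝ → ℝ),
    a I (fun x => c * f x + g x) = (c : ℂ) * a I f + a I g

/-- The energy condition: `Σ_{I ⊆ I₀} |a_I(f)|² ≤ C ‖f χ_{I₀}^M‖_{L²}²`. -/
def EnergyCond (a : DyadicI → (ℝ → ℝ) → ℂ) (C : ℝ≥0∞) (M : ℕ) : Prop :=
  ∀ (I₀ : DyadicI) (f : ℝ → ℝ), MemLp f 2 (volume : Measure ℝ) →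
    (∑' I : {I : DyadicI // I.set ⊆ I₀.set}, ((‖a (I : DyadicI) f‖₊ : ℝ≥0∞)) ^ 2) ≤
      C * eLpNorm (fun x => f x * chiD I₀ x ^ M) 2 volume ^ 2

/-- The Carleson size condition:
`sup_{I ⊆ I₀} (|I|⁻¹ Σ_{J ⊆ I} |a_J(f)|²)^{1/2} ≤ C sup_{I ⊆ I₀} |I|⁻¹ ‖f χ_I^M‖_{L¹}`. -/
def SizeCond (a : DyadicI → (ℝ → ℝ) → ℂ) (C : ℝ≥0∞) (M : ℕ) : Prop :=
  ∀ (I₀ : DyadicI) (f : ℝ → ℝ), MemLp f 2 (volume : Measure ℝ) →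
    (⨆ I : {I : DyadicI // I.set ⊆ I₀.set},
        ((∑' J : {J : DyadicI // J.set ⊆ (I : DyadicI).set},
            ((‖a (J : DyadicI) f‖₊ : ℝ≥0∞)) ^ 2) / ENNReal.ofReal (I : DyadicI).len)
          ^ (1/2 : ℝ)) ≤
      C * ⨆ I : {I : DyadicI // I.set ⊆ I₀.set},
        (∫⁻ x, (‖f x * chiD (I : DyadicI) x ^ M‖₊ : ℝ≥0∞) ∂volume) /
          ENNReal.ofReal (I : DyadicI).len

/-- An interval of `ℝ` with positive length. -/
structure Itv where
  a : ℝ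
  b : ℝ
  hab : a < b

namespace Itv

/-- The underlying set. -/
def set (Q : Itv) : Set ℝ := Set.Ico Q.a Q.b

/-- The length. -/
def len (Q : Itv) : ℝ := Q.b - Q.a

end Itv

/-- The localization function `χ_Q(x) = (1 + dist(x,Q)/ℓ(Q))⁻¹` of an interval. -/
def chiI (Q : Itv) (x : ℝ) : ℝ := (1 + Metric.infDist x Q.set / Q.len)⁻¹

/-- A collection `S` of intervals is `η`-sparse if one can choose pairwise disjoint
measurable major subsets `E Q ⊆ Q` with `|E Q| ≥ η |Q|`. -/
def IsSparseI (η : ℝ) (S : Set Itv) : Prop :=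
  ∃ E : Itv → Set ℝ,
    (∀ Q ∈ S, MeasurableSet (E Q)) ∧
    (∀ Q ∈ S, E Q ⊆ Q.set) ∧
    S.PairwiseDisjoint E ∧
    ∀ Q ∈ S, ENNReal.ofReal η * volume Q.set ≤ volume (E Q)

/-- The localized square function `(Σ_{I ∈ 𝒥} |a_I(f)|² 1_I/|I|)^{1/2}`, valued in `ℝ≥0∞`. -/
def sqFun (a : DyadicI → (ℝ → ℝ) → ℂ) (𝒥 : Finset DyadicI) (f : ℝ → ℝ) (x : ℝ) : ℝ≥0∞ :=
  (∑ I ∈ 𝒥, (‖a I f‖₊ : ℝ≥0∞) ^ 2 * I.set.indicator (fun _ => (1 : ℝ≥0∞)) x /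
      ENNReal.ofReal I.len) ^ (1/2 : ℝ)

/-- The weak-`L^p` quasinorm `sup_{λ>0} λ |{h > λ}|^{1/p}` of an `ℝ≥0∞`-valued function. -/
def wkNorm (p : ℝ) (h : ℝ → ℝ≥0∞) : ℝ≥0∞ :=
  ⨆ (l : ℝ) (_ : 0 < l), ENNReal.ofReal l * (volume {x | ENNReal.ofReal l < h x}) ^ (1 / p)

namespace DyadicI

lemma len_pos (I : DyadicI) : 0 < I.len := zpow_pos (by norm_num) _

lemma set_nonempty (I : DyadicI) : I.set.Nonempty :=
  ⟨I.a, le_refl _, lt_add_of_pos_right _ I.len_pos⟩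

lemma measurableSet_set (I : DyadicI) : MeasurableSet I.set := measurableSet_Ico

lemma volume_set (I : DyadicI) : volume I.set = ENNReal.ofReal I.len := by
  rw [DyadicI.set, Real.volume_Ico]; congr 1; ring

lemma len_le_of_subset {I J : DyadicI} (h : I.set ⊆ J.set) : I.len ≤ J.len := by
  rw [DyadicI.set, DyadicI.set, Set.Ico_subset_Ico_iff (lt_add_of_pos_right _ I.len_pos)] at h
  linarith [h.1, h.2]

lemma subset_antisymm' {I J : DyadicI} (h : I.set ⊆ J.set) (hl : J.len ≤ I.len) :
    J.set ⊆ I.set := by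
  rw [DyadicI.set, DyadicI.set, Set.Ico_subset_Ico_iff (lt_add_of_pos_right _ I.len_pos)] at h
  rw [DyadicI.set, DyadicI.set, Set.Ico_subset_Ico_iff (lt_add_of_pos_right _ J.len_pos)]
  constructor <;> linarith [h.1, h.2]

lemma subset_of_mem_of_le {I J : DyadicI} (hk : I.k ≤ J.k) {x : ℝ}
    (hx : x ∈ I.set) (hx' : x ∈ J.set) : I.set ⊆ J.set := by
  have hlen : J.len = ((2:ℤ) ^ (J.k - I.k).toNat : ℤ) * I.len := by
    rw [DyadicI.len, DyadicI.len]
    push_cast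
    rw [← zpow_natCast (2:ℝ), Int.toNat_of_nonneg (by omega),
      ← zpow_add₀ (by norm_num : (2:ℝ) ≠ 0)]
    congr 1; omega
  set D : ℤ := (2:ℤ) ^ (J.k - I.k).toNat with hD
  -- membership in J in terms of floor of z / I.len
  have key : ∀ z : ℝ, z ∈ J.set ↔ J.m * D ≤ ⌊z / I.len⌋ ∧ ⌊z / I.len⌋ < (J.m + 1) * D := by
    intro z
    have h1 : z ∈ J.set ↔ ((J.m * D : ℤ) : ℝ) ≤ z / I.len ∧ z / I.len < (((J.m + 1) * D : ℤ) : ℝ) := by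
      rw [DyadicI.set, Set.mem_Ico, DyadicI.a, ← DyadicI.len, hlen,
        le_div_iff₀ I.len_pos, div_lt_iff₀ I.len_pos]
      push_cast
      constructor <;> rintro ⟨u, v⟩ <;> constructor <;> nlinarith
    rw [h1, ← Int.le_floor, ← Int.floor_lt]
  -- membership in I in terms of the same floor
  have keyI : ∀ z : ℝ, z ∈ I.set ↔ ⌊z / I.len⌋ = I.m := by
    intro z
    rw [DyadicI.set, Set.mem_Ico, DyadicI.a, ← DyadicI.len]
    rw [show (I.m : ℝ) * I.len + I.len = ((I.m + 1 : ℤ) : ℝ) * I.len by push_cast; ring]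
    rw [← le_div_iff₀ I.len_pos, ← div_lt_iff₀ I.len_pos, ← Int.le_floor, ← Int.floor_lt]
    omega
  intro y hy
  rw [keyI] at hx hy
  rw [key] at hx' ⊢
  omega

/-- Dyadic dichotomy. -/
lemma subset_or_subset {I J : DyadicI} {x : ℝ} (hx : x ∈ I.set) (hx' : x ∈ J.set) :
    I.set ⊆ J.set ∨ J.set ⊆ I.set := by
  rcases le_total I.k J.k with h | h
  · exact Or.inl (subset_of_mem_of_le h hx hx')
  · exact Or.inr (subset_of_mem_of_le h hx' hx)

lemma disjoint_of_not_subset {I J : DyadicI} (h1 : ¬ I.set ⊆ J.set) (h2 : ¬ J.set ⊆ I.set) :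
    Disjoint I.set J.set := by
  rw [Set.disjoint_left]
  intro x hx hx'
  rcases subset_or_subset hx hx' with h | h <;> tauto

end DyadicI
/-- Abstract square function with weights `w`. -/
def sqW (w : DyadicI → ℝ≥0∞) (𝒥 : Finset DyadicI) (x : ℝ) : ℝ≥0∞ :=
  (∑ I ∈ 𝒥, w I ^ 2 * I.set.indicator (fun _ => (1 : ℝ≥0∞)) x /
      ENNReal.ofReal I.len) ^ (1/2 : ℝ)

lemma sqFun_eq_sqW (a : DyadicI → (ℝ → ℝ) → ℂ) (𝒥 : Finset DyadicI) (f : ℝ → ℝ) :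
    sqFun a 𝒥 f = sqW (fun I => (‖a I f‖₊ : ℝ≥0∞)) 𝒥 := rfl

lemma sqW_mono (w : DyadicI → ℝ≥0∞) {𝒥 𝒦 : Finset DyadicI} (h : 𝒥 ⊆ 𝒦) (x : ℝ) :
    sqW w 𝒥 x ≤ sqW w 𝒦 x := by
  apply ENNReal.rpow_le_rpow _ (by norm_num)
  exact Finset.sum_le_sum_of_subset h

lemma measurable_sqW (w : DyadicI → ℝ≥0∞) (𝒥 : Finset DyadicI) :
    Measurable (sqW w 𝒥) := by
  apply Measurable.pow_const
  apply Finset.measurable_sum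
  intro I _
  apply Measurable.div_const
  exact (measurable_const.indicator I.measurableSet_set).const_mul _

lemma wkNorm_mono {p : ℝ} (hp : 0 < p) {h h' : ℝ → ℝ≥0∞} (hle : ∀ x, h x ≤ h' x) :
    wkNorm p h ≤ wkNorm p h' := by
  apply iSup_mono; intro l
  apply iSup_mono; intro hl
  apply mul_le_mul_right
  apply ENNReal.rpow_le_rpow _ (by positivity)
  apply measure_mono
  exact fun x hx => lt_of_lt_of_le hx (hle x)

lemma wkNorm_le_chebyshev {p : ℝ} (hp : 0 < p) (h : ℝ → ℝ≥0∞) {l : ℝ} (hl : 0 < l) :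
    volume {x | ENNReal.ofReal l < h x} ≤ wkNorm p h ^ p / ENNReal.ofReal l ^ p := by
  have h1 : ENNReal.ofReal l * (volume {x | ENNReal.ofReal l < h x}) ^ (1 / p) ≤ wkNorm p h := by
    rw [wkNorm]
    exact le_iSup₂ (f := fun (l : ℝ) (_ : 0 < l) =>
      ENNReal.ofReal l * (volume {x | ENNReal.ofReal l < h x}) ^ (1 / p)) l hl
  have hl0 : ENNReal.ofReal l ≠ 0 := by simp [hl]
  have hlt : ENNReal.ofReal l ≠ ∞ := ENNReal.ofReal_ne_top
  have h2 : (volume {x | ENNReal.ofReal l < h x}) ^ (1 / p) ≤ wkNorm p h / ENNReal.ofReal l := by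
    rw [ENNReal.le_div_iff_mul_le (Or.inl hl0) (Or.inl hlt), mul_comm]
    exact h1
  calc volume {x | ENNReal.ofReal l < h x}
      = ((volume {x | ENNReal.ofReal l < h x}) ^ (1 / p)) ^ p := by
        rw [← ENNReal.rpow_mul, one_div, inv_mul_cancel₀ hp.ne', ENNReal.rpow_one]
    _ ≤ (wkNorm p h / ENNReal.ofReal l) ^ p := ENNReal.rpow_le_rpow h2 hp.le
    _ = wkNorm p h ^ p / ENNReal.ofReal l ^ p := ENNReal.div_rpow_of_nonneg _ _ hp.le

/-- Cauchy–Schwarz in `ℝ≥0∞`. -/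
lemma enn_CS {ι : Type*} (s : Finset ι) (r f g : ι → ℝ≥0∞)
    (hs : ∀ i ∈ s, r i ^ 2 = f i * g i) :
    ∑ i ∈ s, r i ≤ (∑ i ∈ s, f i) ^ (1/2 : ℝ) * (∑ i ∈ s, g i) ^ (1/2 : ℝ) := by
  have key : (∑ i ∈ s, r i) ^ 2 ≤ (∑ i ∈ s, f i) * (∑ i ∈ s, g i) := by
    by_cases hg0 : ∑ i ∈ s, g i = 0
    · have : ∀ i ∈ s, r i = 0 := by
        intro i hi
        have hgi : g i = 0 := by
          have := (Finset.sum_eq_zero_iff.1 hg0) i hi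
          exact this
        have : r i ^ 2 = 0 := by rw [hs i hi, hgi, mul_zero]
        exact pow_eq_zero_iff (by norm_num) |>.1 this
      rw [Finset.sum_eq_zero this]
      simp
    by_cases hf0 : ∑ i ∈ s, f i = 0
    · have : ∀ i ∈ s, r i = 0 := by
        intro i hi
        have hfi : f i = 0 := (Finset.sum_eq_zero_iff.1 hf0) i hi
        have : r i ^ 2 = 0 := by rw [hs i hi, hfi, zero_mul]
        exact pow_eq_zero_iff (by norm_num) |>.1 this
      rw [Finset.sum_eq_zero this]
      simp
    by_cases hf : ∑ i ∈ s, f i = ∞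
    · rw [hf, ENNReal.top_mul hg0]; exact le_top
    by_cases hg : ∑ i ∈ s, g i = ∞
    · rw [hg, ENNReal.mul_top hf0]; exact le_top
    -- finite case: move to ℝ≥0
    have hfi : ∀ i ∈ s, f i ≠ ∞ := fun i hi => ne_of_lt (ENNReal.sum_lt_top.1 (lt_of_le_of_ne le_top hf) i hi)
    have hgi : ∀ i ∈ s, g i ≠ ∞ := fun i hi => ne_of_lt (ENNReal.sum_lt_top.1 (lt_of_le_of_ne le_top hg) i hi)
    have hri : ∀ i ∈ s, r i ≠ ∞ := by
      intro i hi
      have : r i ^ 2 ≠ ∞ := by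
        rw [hs i hi]; exact ENNReal.mul_ne_top (hfi i hi) (hgi i hi)
      intro hr; rw [hr] at this; simp at this
    have er : ∀ i ∈ s, r i = ((r i).toNNReal : ℝ≥0∞) := fun i hi => (ENNReal.coe_toNNReal (hri i hi)).symm
    have ef : ∀ i ∈ s, f i = ((f i).toNNReal : ℝ≥0∞) := fun i hi => (ENNReal.coe_toNNReal (hfi i hi)).symm
    have eg : ∀ i ∈ s, g i = ((g i).toNNReal : ℝ≥0∞) := fun i hi => (ENNReal.coe_toNNReal (hgi i hi)).symm
    rw [Finset.sum_congr rfl er, Finset.sum_congr rfl ef, Finset.sum_congr rfl eg,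
      ← ENNReal.coe_finset_sum, ← ENNReal.coe_finset_sum, ← ENNReal.coe_finset_sum,
      ← ENNReal.coe_pow, ← ENNReal.coe_mul, ENNReal.coe_le_coe]
    apply Finset.sum_sq_le_sum_mul_sum_of_sq_eq_mul s (fun _ _ => zero_le) (fun _ _ => zero_le)
    intro i hi
    have := hs i hi
    have h2 : ((r i) ^ 2).toNNReal = (f i * g i).toNNReal := by rw [this]
    rw [ENNReal.toNNReal_pow, ENNReal.toNNReal_mul] at h2
    exact h2
  calc ∑ i ∈ s, r i = ((∑ i ∈ s, r i) ^ 2) ^ (1/2 : ℝ) := by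
        rw [← ENNReal.rpow_natCast _ 2, ← ENNReal.rpow_mul]
        norm_num
    _ ≤ ((∑ i ∈ s, f i) * (∑ i ∈ s, g i)) ^ (1/2 : ℝ) := ENNReal.rpow_le_rpow key (by norm_num)
    _ = _ := ENNReal.mul_rpow_of_nonneg _ _ (by norm_num)
namespace DyadicI

lemma set_injective : Function.Injective DyadicI.set := by
  intro I J h
  have h1 : I.set ⊆ J.set := h.le
  have h2 : J.set ⊆ I.set := h.ge
  have hlen : I.len = J.len := le_antisymm (len_le_of_subset h1) (len_le_of_subset h2)
  have hk : I.k = J.k := by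
    by_contra hne
    rcases lt_or_gt_of_ne hne with hlt | hlt
    · exact absurd hlen (ne_of_lt (zpow_lt_zpow_right₀ (by norm_num) hlt))
    · exact absurd hlen.symm (ne_of_lt (zpow_lt_zpow_right₀ (by norm_num) hlt))
  have ha : I.a = J.a := by
    rw [DyadicI.set, DyadicI.set, Set.Ico_subset_Ico_iff
      (lt_add_of_pos_right _ I.len_pos)] at h1
    rw [DyadicI.set, DyadicI.set, Set.Ico_subset_Ico_iff
      (lt_add_of_pos_right _ J.len_pos)] at h2
    linarith [h1.1, h2.1]
  have hm : I.m = J.m := by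
    rw [DyadicI.a, DyadicI.a, hk] at ha
    have h2k : ((2:ℝ) ^ J.k) ≠ 0 := ne_of_gt J.len_pos
    exact_mod_cast mul_right_cancel₀ h2k ha
  cases I; cases J; simp_all

end DyadicI

/-- The maximal elements of a finite collection of dyadic intervals. -/
def mxD (𝒢 : Finset DyadicI) : Finset DyadicI :=
  𝒢.filter (fun M => ∀ J ∈ 𝒢, M.set ⊆ J.set → J.set ⊆ M.set)

lemma mxD_subset (𝒢 : Finset DyadicI) : mxD 𝒢 ⊆ 𝒢 := Finset.filter_subset _ _

lemma exists_mxD {𝒢 : Finset DyadicI} {I : DyadicI} (hI : I ∈ 𝒢) :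
    ∃ M ∈ mxD 𝒢, I.set ⊆ M.set := by
  obtain ⟨M, hM, hmax⟩ := Finset.exists_max_image (𝒢.filter (fun J => I.set ⊆ J.set))
    DyadicI.len ⟨I, Finset.mem_filter.2 ⟨hI, Set.Subset.refl _⟩⟩
  rw [Finset.mem_filter] at hM
  refine ⟨M, Finset.mem_filter.2 ⟨hM.1, fun J hJ hMJ => ?_⟩, hM.2⟩
  have hJs : J ∈ 𝒢.filter (fun J => I.set ⊆ J.set) :=
    Finset.mem_filter.2 ⟨hJ, hM.2.trans hMJ⟩
  exact DyadicI.subset_antisymm' hMJ (hmax J hJs)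

lemma mxD_disjoint {𝒢 : Finset DyadicI} {M M' : DyadicI} (hM : M ∈ mxD 𝒢)
    (hM' : M' ∈ mxD 𝒢) (hne : M ≠ M') : Disjoint M.set M'.set := by
  rw [mxD, Finset.mem_filter] at hM hM'
  apply DyadicI.disjoint_of_not_subset
  · intro hsub
    exact hne (DyadicI.set_injective (le_antisymm hsub (hM.2 M' hM'.1 hsub)))
  · intro hsub
    exact hne (DyadicI.set_injective (le_antisymm (hM'.2 M hM.1 hsub) hsub))

lemma subset_unique_mxD {𝒢 : Finset DyadicI} {M M' : DyadicI} (hM : M ∈ mxD 𝒢)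
    (hM' : M' ∈ mxD 𝒢) {s : Set ℝ} (hs : s.Nonempty) (h1 : s ⊆ M.set) (h2 : s ⊆ M'.set) :
    M = M' := by
  by_contra hne
  obtain ⟨x, hx⟩ := hs
  exact Set.disjoint_left.1 (mxD_disjoint hM hM' hne) (h1 hx) (h2 hx)

lemma biUnion_mxD (𝒢 : Finset DyadicI) :
    (mxD 𝒢).biUnion (fun M => 𝒢.filter (fun I => I.set ⊆ M.set)) = 𝒢 := by
  apply Finset.Subset.antisymm
  · intro I hI
    rw [Finset.mem_biUnion] at hI
    obtain ⟨M, _, hIM⟩ := hI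
    exact (Finset.mem_filter.1 hIM).1
  · intro I hI
    obtain ⟨M, hM, hIM⟩ := exists_mxD hI
    exact Finset.mem_biUnion.2 ⟨M, hM, Finset.mem_filter.2 ⟨hI, hIM⟩⟩

lemma pairwiseDisjoint_mxD_family (𝒢 : Finset DyadicI) (t : DyadicI → Finset DyadicI)
    (ht : ∀ M, ∀ I ∈ t M, I.set ⊆ M.set) :
    (↑(mxD 𝒢) : Set DyadicI).PairwiseDisjoint t := by
  intro M hM M' hM' hne
  simp only [Finset.disjoint_left]
  intro I hI hI'
  exact hne (subset_unique_mxD hM hM' I.set_nonempty (ht M I hI) (ht M' I hI'))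

lemma sum_mxD {β : Type*} [AddCommMonoid β] (𝒢 : Finset DyadicI) (F : DyadicI → β) :
    ∑ I ∈ 𝒢, F I = ∑ M ∈ mxD 𝒢, ∑ I ∈ 𝒢.filter (fun I => I.set ⊆ M.set), F I := by
  conv_lhs => rw [← biUnion_mxD 𝒢]
  apply Finset.sum_biUnion
  exact pairwiseDisjoint_mxD_family 𝒢 _ (fun M I hI => (Finset.mem_filter.1 hI).2)
lemma cs_term (a b L e : ℝ≥0∞) (he : e ^ 2 = e) :
    (a * b / L * e) ^ 2 = (a ^ 2 * e / L) * (b ^ 2 * e / L) := by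
  have h1 : (a * b / L * e) ^ 2 = a ^ 2 * b ^ 2 * (L⁻¹) ^ 2 * e ^ 2 := by
    rw [div_eq_mul_inv]; ring
  have h2 : (a ^ 2 * e / L) * (b ^ 2 * e / L) = a ^ 2 * b ^ 2 * (L⁻¹) ^ 2 * e ^ 2 := by
    rw [div_eq_mul_inv, div_eq_mul_inv]; ring
  rw [h1, h2]

lemma indicator_one_sq (s : Set ℝ) (x : ℝ) :
    (s.indicator (fun _ => (1:ℝ≥0∞)) x) ^ 2 = s.indicator (fun _ => (1:ℝ≥0∞)) x := by
  by_cases h : x ∈ s <;> simp [h]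

/-- If the weak norm of a localized square function vanishes, the coefficients vanish. -/
lemma coeff_eq_zero_of_wkNorm_eq_zero {p : ℝ} (hp : 0 < p) (u : DyadicI → ℝ≥0∞)
    {𝒥 : Finset DyadicI} {I : DyadicI} (hI : I ∈ 𝒥) (hfin : u I ≠ ∞)
    (h0 : wkNorm p (sqW u 𝒥) = 0) : u I = 0 := by
  by_contra hu
  have hL0 : ENNReal.ofReal I.len ≠ 0 := by
    simp [ENNReal.ofReal_eq_zero, not_le, I.len_pos]
  have hlow : ∀ x ∈ I.set, (u I ^ 2 / ENNReal.ofReal I.len) ^ (1/2:ℝ) ≤ sqW u 𝒥 x := by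
    intro x hx
    apply ENNReal.rpow_le_rpow _ (by norm_num)
    calc u I ^ 2 / ENNReal.ofReal I.len
        = u I ^ 2 * I.set.indicator (fun _ => (1:ℝ≥0∞)) x / ENNReal.ofReal I.len := by
          simp [hx]
      _ ≤ _ := Finset.single_le_sum
          (f := fun J => u J ^ 2 * J.set.indicator (fun _ => (1:ℝ≥0∞)) x / ENNReal.ofReal J.len)
          (fun _ _ => zero_le) hI
  set c : ℝ≥0∞ := (u I ^ 2 / ENNReal.ofReal I.len) ^ (1/2:ℝ) with hc
  have hbase_pos : 0 < u I ^ 2 / ENNReal.ofReal I.len :=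
    ENNReal.div_pos (by simpa [pow_eq_zero_iff] using hu) ENNReal.ofReal_ne_top
  have hbase_top : u I ^ 2 / ENNReal.ofReal I.len ≠ ∞ :=
    (ENNReal.div_lt_top (by simpa using hfin) hL0).ne
  have hc0 : 0 < c := ENNReal.rpow_pos hbase_pos hbase_top
  have hcT : c ≠ ∞ := ENNReal.rpow_ne_top_of_nonneg (by norm_num) hbase_top
  set l : ℝ := c.toReal / 2 with hl
  have hl0 : 0 < l := by
    have := ENNReal.toReal_pos hc0.ne' hcT
    positivity
  have hlc : ENNReal.ofReal l < c := by
    rw [← ENNReal.ofReal_toReal hcT]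
    rw [ENNReal.ofReal_lt_ofReal_iff (ENNReal.toReal_pos hc0.ne' hcT)]
    linarith [ENNReal.toReal_pos hc0.ne' hcT]
  have hset : I.set ⊆ {x | ENNReal.ofReal l < sqW u 𝒥 x} :=
    fun x hx => lt_of_lt_of_le hlc (hlow x hx)
  have hW : ENNReal.ofReal l * (volume {x | ENNReal.ofReal l < sqW u 𝒥 x}) ^ (1/p)
      ≤ wkNorm p (sqW u 𝒥) :=
    le_iSup₂ (f := fun (l : ℝ) (_ : 0 < l) =>
      ENNReal.ofReal l * (volume {x | ENNReal.ofReal l < sqW u 𝒥 x}) ^ (1 / p)) l hl0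
  rw [h0, le_zero_iff, mul_eq_zero] at hW
  rcases hW with h | h
  · rw [ENNReal.ofReal_eq_zero] at h; linarith
  · rw [ENNReal.rpow_eq_zero_iff] at h
    rcases h with ⟨h, _⟩ | ⟨_, h⟩
    · have : volume I.set = 0 := le_antisymm (h ▸ measure_mono hset) (zero_le)
      rw [I.volume_set, ENNReal.ofReal_eq_zero] at this
      linarith [I.len_pos]
    · linarith [one_div_pos.2 hp]

/-- Level set estimate from the weak norm bound. -/
lemma vol_level_le {p : ℝ} (hp : 0 < p) (h : ℝ → ℝ≥0∞) {A L : ℝ≥0∞}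
    (hA0 : A ≠ 0) (hAT : A ≠ ∞) (hLT : L ≠ ∞)
    (hW : wkNorm p h ≤ A * L ^ (1/p : ℝ)) :
    volume {x | ENNReal.ofReal (((8:ℝ≥0∞) ^ (1/p:ℝ) * A).toReal) < h x} ≤ L / 8 := by
  have h8T : ((8:ℝ≥0∞) ^ (1/p:ℝ)) ≠ ∞ :=
    ENNReal.rpow_ne_top_of_nonneg (by positivity) (by norm_num)
  have h80 : ((8:ℝ≥0∞) ^ (1/p:ℝ)) ≠ 0 := (ENNReal.rpow_pos (by norm_num) (by norm_num)).ne'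
  set l : ℝ := ((8:ℝ≥0∞) ^ (1/p:ℝ) * A).toReal with hldef
  have hmulT : ((8:ℝ≥0∞) ^ (1/p:ℝ) * A) ≠ ∞ := ENNReal.mul_ne_top h8T hAT
  have hofl : ENNReal.ofReal l = (8:ℝ≥0∞) ^ (1/p:ℝ) * A := ENNReal.ofReal_toReal hmulT
  have hl0 : 0 < l := ENNReal.toReal_pos (mul_ne_zero h80 hA0) hmulT
  calc volume {x | ENNReal.ofReal l < h x}
      ≤ wkNorm p h ^ p / ENNReal.ofReal l ^ p := wkNorm_le_chebyshev hp h hl0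
    _ ≤ (A * L ^ (1/p:ℝ)) ^ p / ENNReal.ofReal l ^ p := by
        gcongr
    _ = (A ^ p * L) / (8 * A ^ p) := by
        rw [hofl]
        congr 1
        · rw [ENNReal.mul_rpow_of_nonneg _ _ hp.le, ← ENNReal.rpow_mul,
            one_div, inv_mul_cancel₀ hp.ne', ENNReal.rpow_one]
        · rw [ENNReal.mul_rpow_of_nonneg _ _ hp.le, ← ENNReal.rpow_mul,
            one_div, inv_mul_cancel₀ hp.ne', ENNReal.rpow_one, mul_comm]
    _ = L / 8 := by
        have hAp0 : A ^ p ≠ 0 := (ENNReal.rpow_pos (lt_of_le_of_ne (zero_le) (Ne.symm hA0)) hAT).ne'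
        have hApT : A ^ p ≠ ∞ := ENNReal.rpow_ne_top_of_nonneg hp.le hAT
        rw [mul_comm 8 (A ^ p), ENNReal.mul_div_mul_left _ _ hAp0 hApT]

/-- Estimate of the sum over "good" intervals. -/
lemma good_sum_bound (u v : DyadicI → ℝ≥0∞) (𝒢M : Finset DyadicI) (M : DyadicI)
    (hsub : ∀ I ∈ 𝒢M, I.set ⊆ M.set) (Ω : Set ℝ) (hΩ : MeasurableSet Ω)
    (cf cg : ℝ≥0∞)
    (hf : ∀ x, x ∉ Ω → sqW u 𝒢M x ≤ cf) (hg : ∀ x, x ∉ Ω → sqW v 𝒢M x ≤ cg) :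
    ∑ I ∈ 𝒢M.filter (fun I => ¬ volume I.set < 2 * volume (I.set ∩ Ω)), u I * v I
      ≤ 2 * (cf * cg) * volume M.set := by
  set good := 𝒢M.filter (fun I => ¬ volume I.set < 2 * volume (I.set ∩ Ω)) with hgood
  have hgood_sub : good ⊆ 𝒢M := Finset.filter_subset _ _
  -- notation
  set ind : Set ℝ → ℝ → ℝ≥0∞ := fun s x => s.indicator (fun _ => (1:ℝ≥0∞)) x with hind
  have hmeas_ind : ∀ I : DyadicI, Measurable (ind I.set) :=
    fun I => measurable_const.indicator I.measurableSet_set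
  have hLpos : ∀ I : DyadicI, volume I.set ≠ 0 := by
    intro I; rw [I.volume_set]; simp [ENNReal.ofReal_eq_zero, not_le, I.len_pos]
  have hLtop : ∀ I : DyadicI, volume I.set ≠ ∞ := by
    intro I; rw [I.volume_set]; exact ENNReal.ofReal_ne_top
  -- step (i): for good I, |I| ≤ 2 |I \ Ω|
  have hgood_vol : ∀ I ∈ good, volume I.set ≤ 2 * volume (I.set \ Ω) := by
    intro I hI
    have h2 : 2 * volume (I.set ∩ Ω) ≤ volume I.set := not_lt.1 (Finset.mem_filter.1 hI).2
    have hsplit : volume (I.set \ Ω) + volume (I.set ∩ Ω) = volume I.set :=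
      measure_diff_add_inter I.set hΩ
    have : volume I.set + volume I.set ≤ 2 * volume (I.set \ Ω) + volume I.set := by
      calc volume I.set + volume I.set
          = 2 * volume (I.set \ Ω) + 2 * volume (I.set ∩ Ω) := by
            rw [← mul_add, hsplit, two_mul]
        _ ≤ 2 * volume (I.set \ Ω) + volume I.set := by gcongr
    exact (ENNReal.add_le_add_iff_right (hLtop I)).1 this
  -- step (ii): turn the sum into an integral over Ωᶜ
  have hIcap : ∀ I : DyadicI, ∫⁻ x in Ωᶜ, ind I.set x = volume (I.set \ Ω) := by
    intro I
    rw [lintegral_indicator I.measurableSet_set, setLIntegral_one,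
      Measure.restrict_apply I.measurableSet_set, Set.diff_eq]
  have key : ∑ I ∈ good, u I * v I
      ≤ 2 * ∫⁻ x in Ωᶜ, ∑ I ∈ good, (u I * v I / volume I.set) * ind I.set x := by
    rw [lintegral_finset_sum _ (fun I _ => ((hmeas_ind I).const_mul _)), Finset.mul_sum]
    apply Finset.sum_le_sum
    intro I hI
    rw [lintegral_const_mul _ (hmeas_ind I), hIcap I]
    calc u I * v I = (u I * v I / volume I.set) * volume I.set :=
          (ENNReal.div_mul_cancel (hLpos I) (hLtop I)).symm
      _ ≤ (u I * v I / volume I.set) * (2 * volume (I.set \ Ω)) := by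
          exact mul_le_mul_right (hgood_vol I hI) _
      _ = 2 * ((u I * v I / volume I.set) * volume (I.set \ Ω)) := by ring
  -- step (iii): pointwise bound of the integrand on Ωᶜ
  have hpoint : ∀ x, x ∈ Ωᶜ →
      ∑ I ∈ good, (u I * v I / volume I.set) * ind I.set x ≤ (cf * cg) * ind M.set x := by
    intro x hx
    by_cases hxM : x ∈ M.set
    · have h1 : ∑ I ∈ good, (u I * v I / volume I.set) * ind I.set x
          ≤ sqW u good x * sqW v good x := by
        apply le_trans (le_of_eq ?_) (enn_CS good
          (fun I => (u I * v I / volume I.set) * ind I.set x)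
          (fun I => u I ^ 2 * ind I.set x / ENNReal.ofReal I.len)
          (fun I => v I ^ 2 * ind I.set x / ENNReal.ofReal I.len) ?_)
        · rfl
        · intro I _
          rw [I.volume_set]
          exact cs_term (u I) (v I) (ENNReal.ofReal I.len) (ind I.set x)
            (indicator_one_sq I.set x)
      have h2 : sqW u good x * sqW v good x ≤ cf * cg := by
        apply mul_le_mul'
        · exact le_trans (sqW_mono u hgood_sub x) (hf x hx)
        · exact le_trans (sqW_mono v hgood_sub x) (hg x hx)
      have h3 : ind M.set x = 1 := Set.indicator_of_mem hxM _
      rw [h3, mul_one]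
      exact h1.trans h2
    · have : ∀ I ∈ good, (u I * v I / volume I.set) * ind I.set x = 0 := by
        intro I hI
        have : x ∉ I.set := fun hxI => hxM (hsub I (hgood_sub hI) hxI)
        rw [show ind I.set x = 0 from Set.indicator_of_notMem this _, mul_zero]
      rw [Finset.sum_eq_zero this]
      exact zero_le
  calc ∑ I ∈ good, u I * v I
      ≤ 2 * ∫⁻ x in Ωᶜ, ∑ I ∈ good, (u I * v I / volume I.set) * ind I.set x := key
    _ ≤ 2 * ∫⁻ x in Ωᶜ, (cf * cg) * ind M.set x := by
        apply mul_le_mul_right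
        exact setLIntegral_mono ((hmeas_ind M).const_mul _) hpoint
    _ ≤ 2 * ∫⁻ x, (cf * cg) * ind M.set x := by
        apply mul_le_mul_right
        exact setLIntegral_le_lintegral _ _
    _ = 2 * (cf * cg) * volume M.set := by
        rw [lintegral_const_mul _ (hmeas_ind M), lintegral_indicator M.measurableSet_set,
          setLIntegral_one]; ring

set_option maxHeartbeats 2000000 in
lemma main_claim {p q : ℝ} (hp : 0 < p) (hq : 0 < q) (u v : DyadicI → ℝ≥0∞)
    (ℱ : Finset DyadicI) (A B : ℝ≥0∞)
    (hA0 : A ≠ 0) (hAT : A ≠ ∞) (hB0 : B ≠ 0) (hBT : B ≠ ∞)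
    (hAw : ∀ M ∈ ℱ, wkNorm p (sqW u (ℱ.filter (fun I => I.set ⊆ M.set)))
        ≤ A * (ENNReal.ofReal M.len) ^ (1/p : ℝ))
    (hBw : ∀ M ∈ ℱ, wkNorm q (sqW v (ℱ.filter (fun I => I.set ⊆ M.set)))
        ≤ B * (ENNReal.ofReal M.len) ^ (1/q : ℝ)) :
    ∀ (n : ℕ) (𝒢 : Finset DyadicI), 𝒢 ⊆ ℱ → 𝒢.card ≤ n →
      ∑ I ∈ 𝒢, u I * v I ≤
        (4 * (8:ℝ≥0∞) ^ (1/p:ℝ) * (8:ℝ≥0∞) ^ (1/q:ℝ)) * A * B *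
          ∑ M ∈ mxD 𝒢, volume M.set := by
  have h8pT : ((8:ℝ≥0∞) ^ (1/p:ℝ)) ≠ ∞ :=
    ENNReal.rpow_ne_top_of_nonneg (by positivity) (by norm_num)
  have h8p0 : ((8:ℝ≥0∞) ^ (1/p:ℝ)) ≠ 0 := (ENNReal.rpow_pos (by norm_num) (by norm_num)).ne'
  have h8qT : ((8:ℝ≥0∞) ^ (1/q:ℝ)) ≠ ∞ :=
    ENNReal.rpow_ne_top_of_nonneg (by positivity) (by norm_num)
  have h8q0 : ((8:ℝ≥0∞) ^ (1/q:ℝ)) ≠ 0 := (ENNReal.rpow_pos (by norm_num) (by norm_num)).ne'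
  set cf : ℝ≥0∞ := (8:ℝ≥0∞) ^ (1/p:ℝ) * A with hcf
  set cg : ℝ≥0∞ := (8:ℝ≥0∞) ^ (1/q:ℝ) * B with hcg
  have hcfT : cf ≠ ∞ := ENNReal.mul_ne_top h8pT hAT
  have hcgT : cg ≠ ∞ := ENNReal.mul_ne_top h8qT hBT
  have hoflf : ENNReal.ofReal cf.toReal = cf := ENNReal.ofReal_toReal hcfT
  have hoflg : ENNReal.ofReal cg.toReal = cg := ENNReal.ofReal_toReal hcgT
  intro n
  induction n with
  | zero =>
    intro 𝒢 _ hcard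
    rw [Finset.card_eq_zero.1 (le_antisymm hcard (Nat.zero_le _))]
    simp
  | succ n ih =>
    intro 𝒢 h𝒢F hcard
    by_cases hemp : 𝒢 = ∅
    · rw [hemp]; simp
    -- the exceptional sets Ω M
    set Ω : DyadicI → Set ℝ := fun M =>
      {x | ENNReal.ofReal cf.toReal < sqW u (𝒢.filter (fun I => I.set ⊆ M.set)) x} ∪
      {x | ENNReal.ofReal cg.toReal < sqW v (𝒢.filter (fun I => I.set ⊆ M.set)) x} with hΩdef
    have hΩmeas : ∀ M, MeasurableSet (Ω M) := by
      intro M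
      apply MeasurableSet.union
      · exact measurableSet_lt measurable_const (measurable_sqW _ _)
      · exact measurableSet_lt measurable_const (measurable_sqW _ _)
    -- volume of Ω M
    have hΩvol : ∀ M ∈ mxD 𝒢, 4 * volume (Ω M) ≤ volume M.set := by
      intro M hM
      have hMF : M ∈ ℱ := h𝒢F (mxD_subset _ hM)
      have hsub : 𝒢.filter (fun I => I.set ⊆ M.set) ⊆ ℱ.filter (fun I => I.set ⊆ M.set) :=
        Finset.filter_subset_filter _ h𝒢F
      have hWu : wkNorm p (sqW u (𝒢.filter (fun I => I.set ⊆ M.set)))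
          ≤ A * (ENNReal.ofReal M.len) ^ (1/p:ℝ) :=
        le_trans (wkNorm_mono hp (fun x => sqW_mono u hsub x)) (hAw M hMF)
      have hWv : wkNorm q (sqW v (𝒢.filter (fun I => I.set ⊆ M.set)))
          ≤ B * (ENNReal.ofReal M.len) ^ (1/q:ℝ) :=
        le_trans (wkNorm_mono hq (fun x => sqW_mono v hsub x)) (hBw M hMF)
      have h1 := vol_level_le hp _ hA0 hAT (ENNReal.ofReal_ne_top (r := M.len)) hWu
      have h2 := vol_level_le hq _ hB0 hBT (ENNReal.ofReal_ne_top (r := M.len)) hWv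
      have hvol : volume (Ω M) ≤ ENNReal.ofReal M.len / 8 + ENNReal.ofReal M.len / 8 :=
        le_trans (measure_union_le _ _) (add_le_add h1 h2)
      calc 4 * volume (Ω M) ≤ 4 * (ENNReal.ofReal M.len / 8 + ENNReal.ofReal M.len / 8) := by
            exact mul_le_mul_right hvol _
        _ = ENNReal.ofReal M.len / 8 * 8 := by ring
        _ = volume M.set := by rw [ENNReal.div_mul_cancel (by norm_num) (by norm_num),
            M.volume_set]
    -- the bad intervals
    set bad : DyadicI → Finset DyadicI := fun M =>
      (𝒢.filter (fun I => I.set ⊆ M.set)).filter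
        (fun I => volume I.set < 2 * volume (I.set ∩ Ω M)) with hbaddef
    set 𝒢' : Finset DyadicI := (mxD 𝒢).biUnion bad with h𝒢'def
    have h𝒢'sub : 𝒢' ⊆ 𝒢 := by
      intro I hI
      rw [h𝒢'def, Finset.mem_biUnion] at hI
      obtain ⟨M, _, hIM⟩ := hI
      exact (Finset.mem_filter.1 (Finset.mem_filter.1 hIM).1).1
    -- maximal intervals are not bad
    have hM_not_bad : ∀ M ∈ mxD 𝒢, M ∉ 𝒢' := by
      intro M hM hMbad
      rw [h𝒢'def, Finset.mem_biUnion] at hMbad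
      obtain ⟨M', hM', hMM'⟩ := hMbad
      rw [hbaddef] at hMM'
      simp only [Finset.mem_filter] at hMM'
      have hMeq : M' = M := subset_unique_mxD hM' hM M.set_nonempty hMM'.1.2 subset_rfl
      rw [hMeq] at hMM'
      have hlt : volume M.set < 2 * volume (M.set ∩ Ω M) := hMM'.2
      have h4 : 4 * volume (Ω M) ≤ volume M.set := hΩvol M hM
      have hL0 : volume M.set ≠ 0 := by
        rw [M.volume_set]; simp [ENNReal.ofReal_eq_zero, not_le, M.len_pos]
      have h2lt : 2 * volume M.set < 2 * (2 * volume (M.set ∩ Ω M)) :=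
        (ENNReal.mul_lt_mul_iff_right (by norm_num) (by norm_num)).2 hlt
      have hchain : 2 * volume M.set < volume M.set := by
        calc 2 * volume M.set < 2 * (2 * volume (M.set ∩ Ω M)) := h2lt
          _ = 4 * volume (M.set ∩ Ω M) := by ring
          _ ≤ 4 * volume (Ω M) := by
              exact mul_le_mul_right (measure_mono Set.inter_subset_right) _
          _ ≤ volume M.set := h4
      exact absurd hchain (not_lt.2 (le_mul_of_one_le_left (zero_le) one_le_two))
    -- cardinality decreases
    obtain ⟨I₀, hI₀⟩ := Finset.nonempty_iff_ne_empty.2 hemp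
    obtain ⟨M₀, hM₀, _⟩ := exists_mxD hI₀
    have hcard' : 𝒢'.card ≤ n := by
      have hsub : 𝒢' ⊆ 𝒢.erase M₀ := by
        intro I hI
        exact Finset.mem_erase.2 ⟨fun h => hM_not_bad M₀ hM₀ (h ▸ hI), h𝒢'sub hI⟩
      have := Finset.card_lt_card (Finset.ssubset_iff_of_subset (Finset.erase_subset _ _)
        |>.2 ⟨M₀, mxD_subset _ hM₀, fun h => Finset.notMem_erase _ _ h⟩)
      have hle := Finset.card_le_card hsub
      omega
    -- good part estimate
    have hgoodM : ∀ M ∈ mxD 𝒢,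
        ∑ I ∈ (𝒢.filter (fun I => I.set ⊆ M.set)).filter
          (fun I => ¬ volume I.set < 2 * volume (I.set ∩ Ω M)), u I * v I
        ≤ 2 * (cf * cg) * volume M.set := by
      intro M hM
      have := good_sum_bound u v (𝒢.filter (fun I => I.set ⊆ M.set)) M
        (fun I hI => (Finset.mem_filter.1 hI).2) (Ω M) (hΩmeas M)
        cf cg ?_ ?_
      · exact this
      · intro x hx
        have : ¬ (ENNReal.ofReal cf.toReal < sqW u (𝒢.filter (fun I => I.set ⊆ M.set)) x) :=
          fun h => hx (Set.mem_union_left _ h)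
        rw [hoflf] at this
        exact not_lt.1 this
      · intro x hx
        have : ¬ (ENNReal.ofReal cg.toReal < sqW v (𝒢.filter (fun I => I.set ⊆ M.set)) x) :=
          fun h => hx (Set.mem_union_right _ h)
        rw [hoflg] at this
        exact not_lt.1 this
    -- m(𝒢') bound
    have hmbound : 2 * (∑ M ∈ mxD 𝒢', volume M.set) ≤ ∑ M ∈ mxD 𝒢, volume M.set := by
      have hpart : (mxD 𝒢).biUnion
          (fun M => (mxD 𝒢').filter (fun M' => M'.set ⊆ M.set)) = mxD 𝒢' := by
        apply Finset.Subset.antisymm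
        · intro M' hM'
          rw [Finset.mem_biUnion] at hM'
          obtain ⟨M, _, hM'M⟩ := hM'
          exact (Finset.mem_filter.1 hM'M).1
        · intro M' hM'
          have hM'𝒢' : M' ∈ 𝒢' := mxD_subset _ hM'
          rw [h𝒢'def, Finset.mem_biUnion] at hM'𝒢'
          obtain ⟨M, hM, hbadM⟩ := hM'𝒢'
          rw [hbaddef] at hbadM
          simp only [Finset.mem_filter] at hbadM
          exact Finset.mem_biUnion.2 ⟨M, hM, Finset.mem_filter.2 ⟨hM', hbadM.1.2⟩⟩
      have hdisj : (↑(mxD 𝒢) : Set DyadicI).PairwiseDisjoint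
          (fun M => (mxD 𝒢').filter (fun M' => M'.set ⊆ M.set)) :=
        pairwiseDisjoint_mxD_family 𝒢 _ (fun M M' hM' => (Finset.mem_filter.1 hM').2)
      have hinner : ∀ M ∈ mxD 𝒢,
          2 * ∑ M' ∈ (mxD 𝒢').filter (fun M' => M'.set ⊆ M.set), volume M'.set
            ≤ volume M.set := by
        intro M hM
        have hstep : ∀ M' ∈ (mxD 𝒢').filter (fun M' => M'.set ⊆ M.set),
            volume M'.set ≤ 2 * volume (M'.set ∩ Ω M) := by
          intro M' hM'
          rw [Finset.mem_filter] at hM'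
          have hM'𝒢' : M' ∈ 𝒢' := mxD_subset _ hM'.1
          rw [h𝒢'def, Finset.mem_biUnion] at hM'𝒢'
          obtain ⟨M₁, hM₁, hbadM⟩ := hM'𝒢'
          rw [hbaddef] at hbadM
          simp only [Finset.mem_filter] at hbadM
          have : M₁ = M := subset_unique_mxD hM₁ hM M'.set_nonempty hbadM.1.2 hM'.2
          exact le_of_lt (this ▸ hbadM.2)
        have hsum : ∑ M' ∈ (mxD 𝒢').filter (fun M' => M'.set ⊆ M.set),
            volume (M'.set ∩ Ω M) ≤ volume (Ω M) := by
          rw [← measure_biUnion_finset ?_ (fun M' _ => (M'.measurableSet_set).inter (hΩmeas M))]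
          · exact measure_mono (Set.iUnion₂_subset (fun M' _ => Set.inter_subset_right))
          · intro M₁ h₁ M₂ h₂ hne
            rw [Finset.mem_coe, Finset.mem_filter] at h₁ h₂
            exact Disjoint.mono Set.inter_subset_left Set.inter_subset_left
              (mxD_disjoint h₁.1 h₂.1 hne)
        calc 2 * ∑ M' ∈ (mxD 𝒢').filter (fun M' => M'.set ⊆ M.set), volume M'.set
            ≤ 2 * ∑ M' ∈ (mxD 𝒢').filter (fun M' => M'.set ⊆ M.set),
                2 * volume (M'.set ∩ Ω M) := by
              exact mul_le_mul_right (Finset.sum_le_sum hstep) _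
          _ = 4 * ∑ M' ∈ (mxD 𝒢').filter (fun M' => M'.set ⊆ M.set),
                volume (M'.set ∩ Ω M) := by rw [← Finset.mul_sum]; ring
          _ ≤ 4 * volume (Ω M) := mul_le_mul_right hsum _
          _ ≤ volume M.set := hΩvol M hM
      have hre : ∑ M' ∈ mxD 𝒢', volume M'.set
          = ∑ M ∈ mxD 𝒢, ∑ M' ∈ (mxD 𝒢').filter (fun M' => M'.set ⊆ M.set),
              volume M'.set := by
        conv_lhs => rw [← hpart]
        exact Finset.sum_biUnion hdisj
      calc 2 * (∑ M' ∈ mxD 𝒢', volume M'.set)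
          = 2 * ∑ M ∈ mxD 𝒢, ∑ M' ∈ (mxD 𝒢').filter (fun M' => M'.set ⊆ M.set),
              volume M'.set := by rw [hre]
        _ = ∑ M ∈ mxD 𝒢, 2 * ∑ M' ∈ (mxD 𝒢').filter (fun M' => M'.set ⊆ M.set),
              volume M'.set := by rw [Finset.mul_sum]
        _ ≤ ∑ M ∈ mxD 𝒢, volume M.set := Finset.sum_le_sum hinner
    -- assemble
    have hsplit : ∑ I ∈ 𝒢, u I * v I
        = (∑ M ∈ mxD 𝒢, ∑ I ∈ bad M, u I * v I)
          + ∑ M ∈ mxD 𝒢, ∑ I ∈ (𝒢.filter (fun I => I.set ⊆ M.set)).filter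
              (fun I => ¬ volume I.set < 2 * volume (I.set ∩ Ω M)), u I * v I := by
      rw [sum_mxD 𝒢 (fun I => u I * v I), ← Finset.sum_add_distrib]
      apply Finset.sum_congr rfl
      intro M _
      rw [hbaddef]
      exact (Finset.sum_filter_add_sum_filter_not _ _ _).symm
    have hbadsum : ∑ M ∈ mxD 𝒢, ∑ I ∈ bad M, u I * v I = ∑ I ∈ 𝒢', u I * v I := by
      have hdisj2 : (↑(mxD 𝒢) : Set DyadicI).PairwiseDisjoint bad := by
        apply pairwiseDisjoint_mxD_family
        intro M I hI
        rw [hbaddef] at hI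
        exact (Finset.mem_filter.1 (Finset.mem_filter.1 hI).1).2
      rw [h𝒢'def]
      exact (Finset.sum_biUnion (f := fun I => u I * v I) hdisj2).symm
    have hIH : ∑ I ∈ 𝒢', u I * v I
        ≤ (4 * (8:ℝ≥0∞) ^ (1/p:ℝ) * (8:ℝ≥0∞) ^ (1/q:ℝ)) * A * B *
          ∑ M ∈ mxD 𝒢', volume M.set := ih 𝒢' (h𝒢'sub.trans h𝒢F) hcard'
    calc ∑ I ∈ 𝒢, u I * v I
        = (∑ M ∈ mxD 𝒢, ∑ I ∈ bad M, u I * v I)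
          + ∑ M ∈ mxD 𝒢, ∑ I ∈ (𝒢.filter (fun I => I.set ⊆ M.set)).filter
              (fun I => ¬ volume I.set < 2 * volume (I.set ∩ Ω M)), u I * v I := hsplit
      _ ≤ (4 * (8:ℝ≥0∞) ^ (1/p:ℝ) * (8:ℝ≥0∞) ^ (1/q:ℝ)) * A * B *
            (∑ M ∈ mxD 𝒢', volume M.set)
          + ∑ M ∈ mxD 𝒢, 2 * (cf * cg) * volume M.set := by
          apply add_le_add
          · rw [hbadsum]; exact hIH
          · exact Finset.sum_le_sum hgoodM
      _ = (2 * (8:ℝ≥0∞) ^ (1/p:ℝ) * (8:ℝ≥0∞) ^ (1/q:ℝ)) * A * B *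
            (2 * ∑ M ∈ mxD 𝒢', volume M.set)
          + 2 * (cf * cg) * ∑ M ∈ mxD 𝒢, volume M.set := by
          rw [← Finset.mul_sum]; ring
      _ ≤ (2 * (8:ℝ≥0∞) ^ (1/p:ℝ) * (8:ℝ≥0∞) ^ (1/q:ℝ)) * A * B *
            (∑ M ∈ mxD 𝒢, volume M.set)
          + 2 * (cf * cg) * ∑ M ∈ mxD 𝒢, volume M.set := by
          exact add_le_add_left (mul_le_mul_right hmbound _) _
      _ = (4 * (8:ℝ≥0∞) ^ (1/p:ℝ) * (8:ℝ≥0∞) ^ (1/q:ℝ)) * A * B *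
            ∑ M ∈ mxD 𝒢, volume M.set := by
          rw [hcf, hcg]; ring

set_option maxHeartbeats 2000000

/-- Localization of the bilinear form via weak-`L^p` norms of localized square functions. -/
theorem localized_estimate_square_functions (p q : ℝ) (hp : 0 < p) (hq : 0 < q) :
    ∃ C : ℝ≥0∞, C ≠ ∞ ∧
      ∀ (a : DyadicI → (ℝ → ℝ) → ℂ), IsLinearCoeff a →
      ∀ (ℐ : Finset DyadicI) (c : DyadicI → ℂ), (∀ I, ‖c I‖ ≤ 1) →
      ∀ (f g : ℝ → ℝ), MemLp f 2 (volume : Measure ℝ) → MemLp g 2 volume →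
      ∀ I₀ : DyadicI,
        (‖∑ I ∈ ℐ.filter (fun I => I.set ⊆ I₀.set), c I * a I f * a I g‖₊ : ℝ≥0∞) ≤
          C * (⨆ I' ∈ ℐ.filter (fun I => I.set ⊆ I₀.set),
                (ENNReal.ofReal I'.len) ^ (-(1/p)) *
                  wkNorm p (sqFun a ((ℐ.filter (fun I => I.set ⊆ I₀.set)).filter
                    (fun I => I.set ⊆ I'.set)) f)) *
            (⨆ I' ∈ ℐ.filter (fun I => I.set ⊆ I₀.set),
                (ENNReal.ofReal I'.len) ^ (-(1/q)) *
                  wkNorm q (sqFun a ((ℐ.filter (fun I => I.set ⊆ I₀.set)).filter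
                    (fun I => I.set ⊆ I'.set)) g)) *
            ENNReal.ofReal I₀.len := by
  refine ⟨4 * (8:ℝ≥0∞) ^ (1/p:ℝ) * (8:ℝ≥0∞) ^ (1/q:ℝ), ?_, ?_⟩
  · exact ENNReal.mul_ne_top (ENNReal.mul_ne_top (by norm_num)
      (ENNReal.rpow_ne_top_of_nonneg (by positivity) (by norm_num)))
      (ENNReal.rpow_ne_top_of_nonneg (by positivity) (by norm_num))
  intro a _ ℐ c hc f g _ _ I₀
  set ℱ : Finset DyadicI := ℐ.filter (fun I => I.set ⊆ I₀.set) with hℱ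
  set u : DyadicI → ℝ≥0∞ := fun I => (‖a I f‖₊ : ℝ≥0∞) with hu
  set v : DyadicI → ℝ≥0∞ := fun I => (‖a I g‖₊ : ℝ≥0∞) with hv
  set A : ℝ≥0∞ := ⨆ I' ∈ ℱ, (ENNReal.ofReal I'.len) ^ (-(1/p)) *
      wkNorm p (sqW u (ℱ.filter (fun I => I.set ⊆ I'.set))) with hA
  set B : ℝ≥0∞ := ⨆ I' ∈ ℱ, (ENNReal.ofReal I'.len) ^ (-(1/q)) *
      wkNorm q (sqW v (ℱ.filter (fun I => I.set ⊆ I'.set))) with hB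
  -- the goal in terms of A and B
  show (‖∑ I ∈ ℱ, c I * a I f * a I g‖₊ : ℝ≥0∞)
      ≤ 4 * (8:ℝ≥0∞) ^ (1/p:ℝ) * (8:ℝ≥0∞) ^ (1/q:ℝ) * A * B * ENNReal.ofReal I₀.len
  -- triangle inequality
  have hLHS : (‖∑ I ∈ ℱ, c I * a I f * a I g‖₊ : ℝ≥0∞) ≤ ∑ I ∈ ℱ, u I * v I := by
    calc (‖∑ I ∈ ℱ, c I * a I f * a I g‖₊ : ℝ≥0∞)
        ≤ ∑ I ∈ ℱ, (‖c I * a I f * a I g‖₊ : ℝ≥0∞) := by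
          rw [← ENNReal.coe_finset_sum]
          exact ENNReal.coe_le_coe.2 (nnnorm_sum_le _ _)
      _ ≤ ∑ I ∈ ℱ, u I * v I := by
          apply Finset.sum_le_sum
          intro I _
          rw [nnnorm_mul, nnnorm_mul]
          calc ((‖c I‖₊ * ‖a I f‖₊ * ‖a I g‖₊ : NNReal) : ℝ≥0∞)
              = (‖c I‖₊ : ℝ≥0∞) * u I * v I := by push_cast; rfl
            _ ≤ 1 * u I * v I := by
                have h1 : (‖c I‖₊ : ℝ≥0∞) ≤ 1 := by
                  rw [← ENNReal.coe_one, ENNReal.coe_le_coe, ← NNReal.coe_le_coe]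
                  simpa using hc I
                exact mul_le_mul_left (mul_le_mul_left h1 _) _
            _ = u I * v I := by rw [one_mul]
  -- degenerate cases
  have hlen0 : (ENNReal.ofReal I₀.len) ≠ 0 := by
    simp [ENNReal.ofReal_eq_zero, not_le, I₀.len_pos]
  have hfacA : ∀ I' : DyadicI, (ENNReal.ofReal I'.len) ^ (-(1/p)) ≠ 0 := by
    intro I'
    apply (ENNReal.rpow_pos ?_ ENNReal.ofReal_ne_top).ne'
    simp [ENNReal.ofReal_pos, I'.len_pos]
  have hfacB : ∀ I' : DyadicI, (ENNReal.ofReal I'.len) ^ (-(1/q)) ≠ 0 := by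
    intro I'
    apply (ENNReal.rpow_pos ?_ ENNReal.ofReal_ne_top).ne'
    simp [ENNReal.ofReal_pos, I'.len_pos]
  have hmemA : ∀ I ∈ ℱ, (ENNReal.ofReal I.len) ^ (-(1/p)) *
      wkNorm p (sqW u (ℱ.filter (fun J => J.set ⊆ I.set))) ≤ A := by
    intro I hI
    exact le_iSup₂ (f := fun I' (_ : I' ∈ ℱ) => (ENNReal.ofReal I'.len) ^ (-(1/p)) *
      wkNorm p (sqW u (ℱ.filter (fun J => J.set ⊆ I'.set)))) I hI
  have hmemB : ∀ I ∈ ℱ, (ENNReal.ofReal I.len) ^ (-(1/q)) *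
      wkNorm q (sqW v (ℱ.filter (fun J => J.set ⊆ I.set))) ≤ B := by
    intro I hI
    exact le_iSup₂ (f := fun I' (_ : I' ∈ ℱ) => (ENNReal.ofReal I'.len) ^ (-(1/q)) *
      wkNorm q (sqW v (ℱ.filter (fun J => J.set ⊆ I'.set)))) I hI
  by_cases hA0 : A = 0
  · have hzero : ∀ I ∈ ℱ, u I = 0 := by
      intro I hI
      have h0 : wkNorm p (sqW u (ℱ.filter (fun J => J.set ⊆ I.set))) = 0 := by
        have := (hmemA I hI).trans (le_of_eq hA0)
        rw [le_zero_iff, mul_eq_zero] at this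
        exact this.resolve_left (hfacA I)
      exact coeff_eq_zero_of_wkNorm_eq_zero hp u
        (Finset.mem_filter.2 ⟨hI, Set.Subset.refl _⟩) ENNReal.coe_ne_top h0
    have : ∑ I ∈ ℱ, u I * v I = 0 :=
      Finset.sum_eq_zero (fun I hI => by rw [hzero I hI, zero_mul])
    calc (‖∑ I ∈ ℱ, c I * a I f * a I g‖₊ : ℝ≥0∞) ≤ 0 := this ▸ hLHS
      _ ≤ _ := zero_le
  by_cases hB0 : B = 0
  · have hzero : ∀ I ∈ ℱ, v I = 0 := by
      intro I hI
      have h0 : wkNorm q (sqW v (ℱ.filter (fun J => J.set ⊆ I.set))) = 0 := by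
        have := (hmemB I hI).trans (le_of_eq hB0)
        rw [le_zero_iff, mul_eq_zero] at this
        exact this.resolve_left (hfacB I)
      exact coeff_eq_zero_of_wkNorm_eq_zero hq v
        (Finset.mem_filter.2 ⟨hI, Set.Subset.refl _⟩) ENNReal.coe_ne_top h0
    have : ∑ I ∈ ℱ, u I * v I = 0 :=
      Finset.sum_eq_zero (fun I hI => by rw [hzero I hI, mul_zero])
    calc (‖∑ I ∈ ℱ, c I * a I f * a I g‖₊ : ℝ≥0∞) ≤ 0 := this ▸ hLHS
      _ ≤ _ := zero_le
  have hC0 : (4 * (8:ℝ≥0∞) ^ (1/p:ℝ) * (8:ℝ≥0∞) ^ (1/q:ℝ)) ≠ 0 := by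
    apply mul_ne_zero (mul_ne_zero (by norm_num) ?_) ?_
    · exact (ENNReal.rpow_pos (by norm_num) (by norm_num)).ne'
    · exact (ENNReal.rpow_pos (by norm_num) (by norm_num)).ne'
  by_cases hAT : A = ∞
  · apply le_top.trans (le_of_eq ?_)
    rw [hAT, ENNReal.mul_top hC0, ENNReal.top_mul hB0, ENNReal.top_mul hlen0]
  by_cases hBT : B = ∞
  · apply le_top.trans (le_of_eq ?_)
    rw [hBT, ENNReal.mul_top (mul_ne_zero hC0 hA0), ENNReal.top_mul hlen0]
  -- main case
  have hAw : ∀ M ∈ ℱ, wkNorm p (sqW u (ℱ.filter (fun I => I.set ⊆ M.set)))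
      ≤ A * (ENNReal.ofReal M.len) ^ (1/p : ℝ) := by
    intro M hM
    have h1 := hmemA M hM
    have hpow0 : (ENNReal.ofReal M.len) ^ (1/p:ℝ) ≠ 0 := by
      apply (ENNReal.rpow_pos ?_ ENNReal.ofReal_ne_top).ne'
      simp [ENNReal.ofReal_pos, M.len_pos]
    have hpowT : (ENNReal.ofReal M.len) ^ (1/p:ℝ) ≠ ∞ :=
      ENNReal.rpow_ne_top_of_nonneg (by positivity) ENNReal.ofReal_ne_top
    calc wkNorm p (sqW u (ℱ.filter (fun I => I.set ⊆ M.set)))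
        = (ENNReal.ofReal M.len) ^ (1/p:ℝ) * ((ENNReal.ofReal M.len) ^ (-(1/p)) *
            wkNorm p (sqW u (ℱ.filter (fun I => I.set ⊆ M.set)))) := by
          rw [← mul_assoc, ENNReal.rpow_neg, ENNReal.mul_inv_cancel hpow0 hpowT, one_mul]
      _ ≤ (ENNReal.ofReal M.len) ^ (1/p:ℝ) * A := mul_le_mul_right h1 _
      _ = A * (ENNReal.ofReal M.len) ^ (1/p:ℝ) := mul_comm _ _
  have hBw : ∀ M ∈ ℱ, wkNorm q (sqW v (ℱ.filter (fun I => I.set ⊆ M.set)))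
      ≤ B * (ENNReal.ofReal M.len) ^ (1/q : ℝ) := by
    intro M hM
    have h1 := hmemB M hM
    have hpow0 : (ENNReal.ofReal M.len) ^ (1/q:ℝ) ≠ 0 := by
      apply (ENNReal.rpow_pos ?_ ENNReal.ofReal_ne_top).ne'
      simp [ENNReal.ofReal_pos, M.len_pos]
    have hpowT : (ENNReal.ofReal M.len) ^ (1/q:ℝ) ≠ ∞ :=
      ENNReal.rpow_ne_top_of_nonneg (by positivity) ENNReal.ofReal_ne_top
    calc wkNorm q (sqW v (ℱ.filter (fun I => I.set ⊆ M.set)))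
        = (ENNReal.ofReal M.len) ^ (1/q:ℝ) * ((ENNReal.ofReal M.len) ^ (-(1/q)) *
            wkNorm q (sqW v (ℱ.filter (fun I => I.set ⊆ M.set)))) := by
          rw [← mul_assoc, ENNReal.rpow_neg, ENNReal.mul_inv_cancel hpow0 hpowT, one_mul]
      _ ≤ (ENNReal.ofReal M.len) ^ (1/q:ℝ) * B := mul_le_mul_right h1 _
      _ = B * (ENNReal.ofReal M.len) ^ (1/q:ℝ) := mul_comm _ _
  have hmain := main_claim hp hq u v ℱ A B hA0 hAT hB0 hBT hAw hBw ℱ.card ℱ subset_rfl le_rfl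
  have hmx : ∑ M ∈ mxD ℱ, volume M.set ≤ ENNReal.ofReal I₀.len := by
    rw [← measure_biUnion_finset ?_ (fun M _ => M.measurableSet_set)]
    · apply le_trans (measure_mono ?_) (le_of_eq I₀.volume_set)
      apply Set.iUnion₂_subset
      intro M hM
      exact (Finset.mem_filter.1 (mxD_subset _ hM)).2
    · intro M hM M' hM' hne
      exact mxD_disjoint hM hM' hne
  calc (‖∑ I ∈ ℱ, c I * a I f * a I g‖₊ : ℝ≥0∞)
      ≤ ∑ I ∈ ℱ, u I * v I := hLHS
    _ ≤ 4 * (8:ℝ≥0∞) ^ (1/p:ℝ) * (8:ℝ≥0∞) ^ (1/q:ℝ) * A * B *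
        ∑ M ∈ mxD ℱ, volume M.set := hmain
    _ ≤ _ := mul_le_mul_right hmx _
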